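/- Let d ≥ 1, α ∈ (0,2), β > −α and γ < 1 + β/α. Define b(x) := −x(1+|x|²)^{β/2} and σ(x) := (1+|x|²)^{γ/2} I (so that ‖σ(x)‖^α = (1+|x|²)^{αγ/2}). Then for every q > 0 there exists a constant c₁ > 0 such that for all x ∈ ℝ^d with |x| > 1: ⟨x, b(x)⟩ + q (1+|x|²)^{αγ/2} |x|^{2−α} ≤ −2^{(min(β/2, 0)) − 1} |x|^{2+β} + c₁. -/

import Mathlib

open MeasureTheory Real
open scoped RealInnerProductSpace

lemma stmt_9_aux (α β γ q : ℝ) (hα0 : 0 < α) (hα2 : α < 2) (hβ : -α < β)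
    (hγ : γ < 1 + β / α) (hq : 0 < q) :
    ∃ c₁ > (0:ℝ), ∀ r : ℝ, 1 < r →
      -((1 + r ^ 2) ^ (β / 2)) * r ^ 2 + q * (1 + r ^ 2) ^ (α * γ / 2) * r ^ (2 - α)
        ≤ -2 ^ (min (β / 2) 0 - 1) * r ^ (2 + β) + c₁ := by
  set M : ℝ := 2 ^ (min (β / 2) 0 - 1) with hM
  have hM0 : 0 < M := rpow_pos_of_pos two_pos _
  set C : ℝ := q * 2 ^ (max (α * γ) 0 / 2) with hC
  have hC0 : 0 < C := mul_pos hq (rpow_pos_of_pos two_pos _)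
  set p : ℝ := α * γ + 2 - α with hp
  set s : ℝ := 2 + β with hs
  have hps : p < s := by
    have h1 : α * γ < α * (1 + β / α) := mul_lt_mul_of_pos_left hγ hα0
    rw [mul_add, mul_one, mul_div_cancel₀ _ (ne_of_gt hα0)] at h1
    simp only [hp, hs]; linarith
  set R : ℝ := max ((C / M) ^ ((s - p)⁻¹)) 1 with hR
  have hR1 : (1:ℝ) ≤ R := le_max_right _ _
  have hR0 : (0:ℝ) < R := lt_of_lt_of_le one_pos hR1
  refine ⟨C * R ^ (max p 0) + 1, by positivity, fun r hr => ?_⟩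
  have hr0 : (0:ℝ) < r := lt_trans one_pos hr
  have hr2 : (0:ℝ) < 1 + r ^ 2 := by positivity
  have hr21 : (1:ℝ) ≤ r ^ 2 := by nlinarith
  have hsq : ∀ t : ℝ, ((r : ℝ) ^ 2) ^ t = r ^ (2 * t) := by
    intro t
    rw [← rpow_natCast r 2, ← rpow_mul hr0.le]
    norm_num
  -- Step A
  have stepA : 2 * M * r ^ s ≤ (1 + r ^ 2) ^ (β / 2) * r ^ 2 := by
    have h2M : 2 * M = 2 ^ (min (β / 2) 0) := by
      have h := rpow_add two_pos 1 (min (β / 2) 0 - 1)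
      rw [rpow_one] at h
      rw [hM, ← h, show 1 + (min (β / 2) 0 - 1) = min (β / 2) 0 from by ring]
    have hrs : r ^ s = r ^ β * r ^ 2 := by
      rw [hs, ← rpow_natCast r 2, ← rpow_add hr0]
      ring_nf
    rcases le_or_gt 0 β with hb | hb
    · have hmin : min (β / 2) 0 = 0 := min_eq_right (by linarith)
      have hle : r ^ β ≤ (1 + r ^ 2) ^ (β / 2) := by
        have := rpow_le_rpow (by positivity : (0:ℝ) ≤ r ^ 2)
          (by linarith : r ^ 2 ≤ 1 + r ^ 2) (by linarith : 0 ≤ β / 2)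
        rwa [hsq (β / 2), mul_div_cancel₀ _ two_ne_zero] at this
      rw [h2M, hmin, rpow_zero, one_mul, hrs]
      have : (0:ℝ) < r ^ 2 := by positivity
      nlinarith
    · have hmin : min (β / 2) 0 = β / 2 := min_eq_left (by linarith)
      have hle : 2 ^ (β / 2) * r ^ β ≤ (1 + r ^ 2) ^ (β / 2) := by
        have h1 : (1 + r ^ 2) ≤ 2 * r ^ 2 := by linarith
        have h2 : (2 * r ^ 2) ^ (β / 2) ≤ (1 + r ^ 2) ^ (β / 2) :=
          rpow_le_rpow_of_nonpos hr2 h1 (by linarith)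
        rw [mul_rpow (by norm_num) (by positivity), hsq (β / 2),
          mul_div_cancel₀ _ two_ne_zero] at h2
        exact h2
      rw [h2M, hmin, hrs]
      have hrb : (0:ℝ) < r ^ β := rpow_pos_of_pos hr0 _
      have : (0:ℝ) < r ^ 2 := by positivity
      nlinarith
  -- Step B
  have stepB : q * (1 + r ^ 2) ^ (α * γ / 2) * r ^ (2 - α) ≤ C * r ^ p := by
    have hkey : (1 + r ^ 2) ^ (α * γ / 2) ≤ 2 ^ (max (α * γ) 0 / 2) * r ^ (α * γ) := by
      rcases le_or_gt 0 (α * γ) with hb | hb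
      · have hmax : max (α * γ) 0 = α * γ := max_eq_left hb
        have h1 : (1 + r ^ 2) ^ (α * γ / 2) ≤ (2 * r ^ 2) ^ (α * γ / 2) :=
          rpow_le_rpow hr2.le (by linarith) (by linarith)
        rw [mul_rpow (by norm_num) (by positivity), hsq (α * γ / 2),
          mul_div_cancel₀ _ two_ne_zero] at h1
        rw [hmax]; exact h1
      · have hmax : max (α * γ) 0 = 0 := max_eq_right hb.le
        have h1 : (1 + r ^ 2) ^ (α * γ / 2) ≤ (r ^ 2) ^ (α * γ / 2) :=
          rpow_le_rpow_of_nonpos (by positivity) (by linarith) (by linarith)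
        rw [hsq (α * γ / 2), mul_div_cancel₀ _ two_ne_zero] at h1
        rw [hmax]; norm_num; exact h1
    have hrp : r ^ (α * γ) * r ^ (2 - α) = r ^ p := by
      rw [← rpow_add hr0, hp]; ring_nf
    calc q * (1 + r ^ 2) ^ (α * γ / 2) * r ^ (2 - α)
        ≤ q * (2 ^ (max (α * γ) 0 / 2) * r ^ (α * γ)) * r ^ (2 - α) := by
          have hrpos : (0:ℝ) < r ^ (2 - α) := rpow_pos_of_pos hr0 _
          have := mul_le_mul_of_nonneg_left hkey hq.le
          nlinarith
      _ = C * r ^ p := by rw [hC, ← hrp]; ring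
  -- Step C
  have stepC : C * r ^ p ≤ M * r ^ s + C * R ^ (max p 0) := by
    rcases le_or_gt ((C / M) ^ ((s - p)⁻¹)) r with hcase | hcase
    · have hbase : (0:ℝ) ≤ (C / M) ^ ((s - p)⁻¹) := rpow_nonneg (by positivity) _
      have h1 : ((C / M) ^ ((s - p)⁻¹)) ^ (s - p) ≤ r ^ (s - p) :=
        rpow_le_rpow hbase hcase (by linarith)
      have h2 : ((C / M) ^ ((s - p)⁻¹)) ^ (s - p) = C / M := by
        rw [← rpow_mul (by positivity : (0:ℝ) ≤ C / M),
          inv_mul_cancel₀ (by linarith : s - p ≠ 0), rpow_one]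
      rw [h2] at h1
      have h3 : C ≤ M * r ^ (s - p) := by
        rw [div_le_iff₀ hM0] at h1; linarith [h1]
      have h4 : C * r ^ p ≤ M * r ^ s := by
        have hrp : (0:ℝ) < r ^ p := rpow_pos_of_pos hr0 _
        calc C * r ^ p ≤ M * r ^ (s - p) * r ^ p :=
              mul_le_mul_of_nonneg_right h3 hrp.le
          _ = M * r ^ s := by
              rw [mul_assoc, ← rpow_add hr0, show s - p + p = s from by ring]
      have : (0:ℝ) ≤ C * R ^ (max p 0) := by positivity
      linarith
    · have hrR : r ≤ R := le_trans hcase.le (le_max_left _ _)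
      have h1 : r ^ p ≤ R ^ (max p 0) := by
        rcases le_or_gt 0 p with hb | hb
        · have hmax : max p 0 = p := max_eq_left hb
          rw [hmax]
          exact rpow_le_rpow hr0.le hrR hb
        · have hmax : max p 0 = 0 := max_eq_right hb.le
          rw [hmax, rpow_zero]
          exact rpow_le_one_of_one_le_of_nonpos hr.le hb.le
      have h2 : C * r ^ p ≤ C * R ^ (max p 0) := mul_le_mul_of_nonneg_left h1 hC0.le
      have : (0:ℝ) ≤ M * r ^ s := by positivity
      linarith
  have hMs : -2 ^ (min (β / 2) 0 - 1) * r ^ (2 + β) = -(M * r ^ s) := by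
    rw [hM, hs]; ring
  rw [hMs]
  linarith

/-- **Example 1.5 of the paper.** For `α ∈ (0,2)`, `β > -α`,
`γ < 1 + β/α`, `b(x) = -x(1+|x|²)^{β/2}` and `σ(x) = (1+|x|²)^{γ/2} I`
(so `‖σ(x)‖^α = (1+|x|²)^{αγ/2}`), for every `q > 0` there is `c₁ > 0` with
`⟨x, b(x)⟩ + q(1+|x|²)^{αγ/2}|x|^{2-α} ≤ -2^{min(β/2,0)-1}|x|^{2+β} + c₁` for `|x| > 1`. -/
theorem stmt_9 (d : ℕ) (hd : 1 ≤ d) (α β γ : ℝ)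
    (hα : α ∈ Set.Ioo (0 : ℝ) 2) (hβ : -α < β) (hγ : γ < 1 + β / α)
    (q : ℝ) (hq : 0 < q) :
    ∃ c₁ > (0 : ℝ), ∀ x : EuclideanSpace ℝ (Fin d), 1 < ‖x‖ →
      ⟪x, -((1 + ‖x‖ ^ 2) ^ (β / 2)) • x⟫ + q * (1 + ‖x‖ ^ 2) ^ (α * γ / 2) * ‖x‖ ^ (2 - α)
        ≤ -2 ^ (min (β / 2) 0 - 1) * ‖x‖ ^ (2 + β) + c₁ := by
  obtain ⟨c₁, hc₁, h⟩ := stmt_9_aux α β γ q hα.1 hα.2 hβ hγ hq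
  refine ⟨c₁, hc₁, fun x hx => ?_⟩
  have hinner : ⟪x, -((1 + ‖x‖ ^ 2) ^ (β / 2)) • x⟫
      = -((1 + ‖x‖ ^ 2) ^ (β / 2)) * ‖x‖ ^ 2 := by
    rw [real_inner_smul_right, real_inner_self_eq_norm_sq]
  rw [hinner]
  exact h ‖x‖ hx
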